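/- Consider the transition formulas of the chart change M_{12} → M_{13} for G_{5,2} on the space F̄_5, which send a point ((c_{34}:c'_{34}), (c_{35}:c'_{35}), (c_{45}:c'_{45})) to ((d_{24}:d'_{24}), (d_{25}:d'_{25}), (d_{45}:d'_{45})) with (d_{2l}:d'_{2l}) = (c_{3l} : c_{3l} − c'_{3l}) for l = 4,5 and (d_{45}:d'_{45}) = (c_{35}(c_{34} − c'_{34}) : c_{34}(c_{35} − c'_{35})). If c'_{34} = c'_{35} = 0 and c_{34} ≠ 0, c_{35} ≠ 0, then (d_{24}:d'_{24}) = (d_{25}:d'_{25}) = (d_{45}:d'_{45}) = (1:1); in particular the continuous extension of this transition map sends the entire one-parameter family {((1:0), (1:0), (c_{45}:c'_{45}))} ⊆ F̄_5 to the single point ((1:1),(1:1),(1:1)), so this extension is not injective on F̄_5. -/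
import Mathlib


open Projectivization

/-- The complex projective line `ℂP¹`. -/
abbrev CP1 : Type := Projectivization ℂ (Fin 2 → ℂ)

lemma v10_ne_zero : (![1, 0] : Fin 2 → ℂ) ≠ 0 := by
  intro h; have := congrFun h 0; simp at this

lemma v11_ne_zero : (![1, 1] : Fin 2 → ℂ) ≠ 0 := by
  intro h; have := congrFun h 0; simp at this


lemma v01_ne_zero : (![0, 1] : Fin 2 → ℂ) ≠ 0 := by
  intro h; have := congrFun h 1; simp at this

lemma rep10_one : Projectivization.rep (Projectivization.mk ℂ ![1, 0] v10_ne_zero) 1 = 0 := by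
  have h := Projectivization.mk_rep (Projectivization.mk ℂ ![1, 0] v10_ne_zero)
  rw [Projectivization.mk_eq_mk_iff] at h
  obtain ⟨a, ha⟩ := h
  have := congrFun ha 1
  simp [Pi.smul_apply] at this
  simp [← this]

lemma mk_cc_eq (c : ℂ) (hc : c ≠ 0) (h : (![c, c] : Fin 2 → ℂ) ≠ 0) :
    Projectivization.mk ℂ ![c, c] h = Projectivization.mk ℂ ![1, 1] v11_ne_zero := by
  rw [Projectivization.mk_eq_mk_iff]
  exact ⟨Units.mk0 c hc, by funext i; fin_cases i <;> simp⟩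

/-- The variety `F̄₅ ⊆ (ℂP¹)³`: triples `((c₃₄:c'₃₄), (c₃₅:c'₃₅), (c₄₅:c'₄₅))` with
`c₃₄·c'₃₅·c₄₅ = c'₃₄·c₃₅·c'₄₅`, expressed through homogeneous representatives. -/
def Fbar5 : Set (CP1 × CP1 × CP1) :=
  {x | Projectivization.rep x.1 0 * Projectivization.rep x.2.1 1 * Projectivization.rep x.2.2 0
    = Projectivization.rep x.1 1 * Projectivization.rep x.2.1 0 * Projectivization.rep x.2.2 1}

/-- For the chart change `M₁₂ → M₁₃` of `G₅,₂`, with images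
`(d₂ₗ:d'₂ₗ) = (c₃ₗ : c₃ₗ - c'₃ₗ)` (`l = 4,5`) and
`(d₄₅:d'₄₅) = (c₃₅(c₃₄ - c'₃₄) : c₃₄(c₃₅ - c'₃₅))`: if `c'₃₄ = c'₃₅ = 0` and
`c₃₄ ≠ 0 ≠ c₃₅`, then all three image coordinates equal `(1:1)`; the whole
one-parameter family `((1:0), (1:0), (c₄₅:c'₄₅))` lies in `F̄₅` (the cubic relation
holds for every `(c₄₅, c'₄₅)`), it contains distinct points, and they are all sent
to the single point `((1:1),(1:1),(1:1))` — so the continuous extension of this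
transition map is not injective on `F̄₅`. -/
theorem statement10 (c34 c'34 c35 c'35 : ℂ)
    (h34 : c34 ≠ 0) (h35 : c35 ≠ 0) (h'34 : c'34 = 0) (h'35 : c'35 = 0) :
    (∀ c45 c'45 : ℂ, c34 * c'35 * c45 = c'34 * c35 * c'45) ∧
    (∀ z : CP1, (Projectivization.mk ℂ ![1, 0] v10_ne_zero,
        Projectivization.mk ℂ ![1, 0] v10_ne_zero, z) ∈ Fbar5) ∧
    Projectivization.mk ℂ ![c34, c34 - c'34]
        (by intro hh; exact h34 (by simpa using congrFun hh 0))
      = Projectivization.mk ℂ ![1, 1] v11_ne_zero ∧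
    Projectivization.mk ℂ ![c35, c35 - c'35]
        (by intro hh; exact h35 (by simpa using congrFun hh 0))
      = Projectivization.mk ℂ ![1, 1] v11_ne_zero ∧
    Projectivization.mk ℂ ![c35 * (c34 - c'34), c34 * (c35 - c'35)]
        (by
          intro hh
          have h0 : c35 * (c34 - c'34) = 0 := by simpa using congrFun hh 0
          rw [h'34, sub_zero] at h0
          exact mul_ne_zero h35 h34 h0)
      = Projectivization.mk ℂ ![1, 1] v11_ne_zero ∧
    ∃ x y : CP1 × CP1 × CP1, x ≠ y ∧ x ∈ Fbar5 ∧ y ∈ Fbar5 ∧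
      x.1 = Projectivization.mk ℂ ![1, 0] v10_ne_zero ∧
      x.2.1 = Projectivization.mk ℂ ![1, 0] v10_ne_zero ∧
      y.1 = Projectivization.mk ℂ ![1, 0] v10_ne_zero ∧
      y.2.1 = Projectivization.mk ℂ ![1, 0] v10_ne_zero := by
  subst h'34 h'35
  have hmem : ∀ z : CP1, (Projectivization.mk ℂ ![1, 0] v10_ne_zero,
      Projectivization.mk ℂ ![1, 0] v10_ne_zero, z) ∈ Fbar5 := by
    intro z
    simp [Fbar5, rep10_one]
  refine ⟨by intro c45 c'45; ring, hmem, ?_, ?_, ?_, ?_⟩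
  · simpa using mk_cc_eq c34 h34 _
  · simpa using mk_cc_eq c35 h35 _
  · have : c35 * (c34 - 0) = c34 * c35 := by ring
    convert mk_cc_eq (c35 * c34) (mul_ne_zero h35 h34) (by
      intro hh; exact h35 (by simpa using (mul_eq_zero.mp (by simpa using congrFun hh 0)).resolve_right h34)) using 2
    funext i; fin_cases i <;> simp <;> ring
  · refine ⟨(Projectivization.mk ℂ ![1, 0] v10_ne_zero, Projectivization.mk ℂ ![1, 0] v10_ne_zero,
      Projectivization.mk ℂ ![1, 0] v10_ne_zero),
      (Projectivization.mk ℂ ![1, 0] v10_ne_zero, Projectivization.mk ℂ ![1, 0] v10_ne_zero,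
      Projectivization.mk ℂ ![0, 1] v01_ne_zero), ?_, hmem _, hmem _, rfl, rfl, rfl, rfl⟩
    intro h
    have h2 := congrArg (fun p => p.2.2) h
    simp only at h2
    rw [Projectivization.mk_eq_mk_iff] at h2
    obtain ⟨a, ha⟩ := h2
    have := congrFun ha 0
    simp [Pi.smul_apply] at this
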